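/- arXiv:1602.05310 — 2 statements merged into one kernel-verified Lean document; each statement's English description precedes it below -/
import Mathlib

section
/- Let f : ℝ^d → ℝ be a quadratic function whose Hessian H = ∇²f satisfies m I ⪯ H ⪯ L I with 0 < m ≤ L. Let w^τ be the τ-th iterate of block coordinate descent where each block I_τ consists of b indices drawn uniformly without replacement from {1,...,d}, with exact block minimization. Then E[f(w^τ)] − f_* ≤ (1 − m/(2 L_eff))^τ (f(w^0) − f_*), where L_eff := e² L + (d log(2d²/b)/b)·‖diag(H)‖_∞. -/
open Matrix Finset

/-- Coordinate projection matrix onto the index set `I`. -/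
noncomputable def proj {ι : Type*} [Fintype ι] [DecidableEq ι]
    (I : Finset ι) : Matrix ι ι ℝ :=
  Matrix.diagonal (fun i => if i ∈ I then 1 else 0)

lemma count_subset_card {d : ℕ} (K : Finset (Fin d)) (b : ℕ) (hKb : K.card ≤ b) :
    ((Finset.powersetCard b (Finset.univ : Finset (Fin d))).filter (fun J => K ⊆ J)).card
      = (d - K.card).choose (b - K.card) := by
  have h1 : ((Finset.powersetCard b (Finset.univ : Finset (Fin d))).filter (fun J => K ⊆ J)).card
      = (Finset.powersetCard (b - K.card) Kᶜ).card := by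
    apply Finset.card_nbij' (fun J => J \ K) (fun J' => J' ∪ K)
    · intro J hJ
      simp only [Finset.mem_coe, Finset.mem_filter, Finset.mem_powersetCard] at hJ ⊢
      refine ⟨fun x hx => ?_, ?_⟩
      · simp only [Finset.mem_sdiff] at hx
        simp [Finset.mem_compl, hx.2]
      · rw [Finset.card_sdiff_of_subset hJ.2, hJ.1.2]
    · intro J' hJ'
      simp only [Finset.mem_coe, Finset.mem_powersetCard, Finset.mem_filter, Finset.mem_powersetCard] at hJ' ⊢
      have hdisj : Disjoint J' K := by
        rw [Finset.disjoint_left]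
        intro x hx hxK
        exact (Finset.mem_compl.mp (hJ'.1 hx)) hxK
      refine ⟨⟨Finset.subset_univ _, ?_⟩, Finset.subset_union_right⟩
      rw [Finset.card_union_of_disjoint hdisj, hJ'.2]
      omega
    · intro J hJ
      simp only [Finset.mem_coe, Finset.mem_filter] at hJ
      exact Finset.sdiff_union_of_subset hJ.2
    · intro J' hJ'
      simp only [Finset.mem_coe, Finset.mem_powersetCard] at hJ'
      have hdisj : Disjoint J' K := by
        rw [Finset.disjoint_left]
        intro x hx hxK
        exact (Finset.mem_compl.mp (hJ'.1 hx)) hxK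
      exact Finset.union_sdiff_cancel_right hdisj
  rw [h1, Finset.card_powersetCard, Finset.card_compl, Fintype.card_fin]


/-- number of size-`b` blocks containing a fixed pair of distinct indices -/
def pairCount (d b : ℕ) : ℕ := if 2 ≤ b then (d-2).choose (b-2) else 0

lemma count_single {d b : ℕ} (hb : 1 ≤ b) (hbd : b ≤ d) (i : Fin d) :
    ((Finset.powersetCard b (Finset.univ : Finset (Fin d))).filter (fun J => i ∈ J)).card
      = (d-1).choose (b-1) := by
  have h := count_subset_card ({i} : Finset (Fin d)) b (by simpa using hb)
  simp only [Finset.card_singleton] at h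
  rw [← h]
  congr 1
  apply Finset.filter_congr
  intro J _
  simp [Finset.singleton_subset_iff]

lemma count_pair {d b : ℕ} (hb : 1 ≤ b) (hbd : b ≤ d) (i j : Fin d) (hij : i ≠ j) :
    ((Finset.powersetCard b (Finset.univ : Finset (Fin d))).filter
        (fun J => i ∈ J ∧ j ∈ J)).card = pairCount d b := by
  unfold pairCount
  by_cases h2 : 2 ≤ b
  · rw [if_pos h2]
    have h := count_subset_card ({i, j} : Finset (Fin d)) b
      (by rw [Finset.card_insert_of_notMem (by simpa using hij), Finset.card_singleton]; omega)
    rw [Finset.card_insert_of_notMem (by simpa using hij), Finset.card_singleton] at h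
    rw [← h]
    congr 1
    apply Finset.filter_congr
    intro J _
    simp [Finset.insert_subset_iff, Finset.singleton_subset_iff]
  · rw [if_neg h2]
    have hb1 : b = 1 := by omega
    rw [Finset.card_eq_zero]
    rw [Finset.filter_eq_empty_iff]
    intro J hJ
    rw [Finset.mem_powersetCard] at hJ
    rintro ⟨hi, hj⟩
    rw [hb1] at hJ
    obtain ⟨x, hx⟩ := Finset.card_eq_one.mp hJ.2
    rw [hx] at hi hj
    simp only [Finset.mem_singleton] at hi hj
    exact hij (hi.trans hj.symm)

lemma choose_identity1 {d b : ℕ} (hb : 1 ≤ b) (hbd : b ≤ d) :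
    (d-1).choose (b-1) * d = d.choose b * b := by
  obtain ⟨d', rfl⟩ : ∃ d', d = d' + 1 := ⟨d-1, by omega⟩
  obtain ⟨b', rfl⟩ : ∃ b', b = b' + 1 := ⟨b-1, by omega⟩
  have h := Nat.add_one_mul_choose_eq d' b'
  simp only [Nat.add_sub_cancel]
  linarith [h]

lemma pairCount_le {d b : ℕ} (hb : 1 ≤ b) (hbd : b ≤ d) :
    pairCount d b ≤ (d-1).choose (b-1) := by
  unfold pairCount
  by_cases h2 : 2 ≤ b
  · rw [if_pos h2]
    have hd2 : 2 ≤ d := le_trans h2 hbd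
    have h : (d-1).choose (b-1) = (d-2).choose (b-2) + (d-2).choose (b-1) := by
      have := Nat.choose_succ_succ (d-2) (b-2)
      rw [show (d-2).succ = d-1 by omega, show (b-2).succ = b-1 by omega] at this
      exact this
    omega
  · rw [if_neg h2]; exact Nat.zero_le _

lemma pairCount_mul {d b : ℕ} (hb : 1 ≤ b) (hbd : b ≤ d) :
    pairCount d b * d ≤ (d-1).choose (b-1) * b := by
  by_cases h2 : 2 ≤ b
  · have hd2 : 2 ≤ d := le_trans h2 hbd
    have hle := pairCount_le hb hbd
    unfold pairCount at *
    rw [if_pos h2] at *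
    obtain ⟨d', rfl⟩ : ∃ d', d = d' + 2 := ⟨d-2, by omega⟩
    obtain ⟨b', rfl⟩ : ∃ b', b = b' + 2 := ⟨b-2, by omega⟩
    simp only [Nat.add_sub_cancel, show d' + 2 - 1 = d' + 1 by omega,
      show b' + 2 - 1 = b' + 1 by omega] at *
    have hid := Nat.add_one_mul_choose_eq d' b'
    nlinarith [hle, hid]
  · unfold pairCount
    rw [if_neg h2]
    simp

-- swap order of summation over blocks and coordinates
lemma block_swap {d b : ℕ} (F : Finset (Fin d) → Fin d → ℝ) :
    ∑ J ∈ Finset.powersetCard b (Finset.univ : Finset (Fin d)), ∑ i ∈ J, F J i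
      = ∑ i, ∑ J ∈ (Finset.powersetCard b (Finset.univ : Finset (Fin d))).filter
          (fun J => i ∈ J), F J i := by
  have h1 : ∀ J : Finset (Fin d), ∑ i ∈ J, F J i = ∑ i, if i ∈ J then F J i else 0 := by
    intro J
    rw [Finset.sum_ite_mem, Finset.univ_inter]
  calc ∑ J ∈ Finset.powersetCard b (Finset.univ : Finset (Fin d)), ∑ i ∈ J, F J i
      = ∑ J ∈ Finset.powersetCard b (Finset.univ : Finset (Fin d)),
          ∑ i, if i ∈ J then F J i else 0 := Finset.sum_congr rfl fun J _ => h1 J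
    _ = ∑ i, ∑ J ∈ Finset.powersetCard b (Finset.univ : Finset (Fin d)),
          if i ∈ J then F J i else 0 := Finset.sum_comm
    _ = _ := Finset.sum_congr rfl fun i _ => (Finset.sum_filter _ _).symm

lemma sum_blocks_single {d b : ℕ} (hb : 1 ≤ b) (hbd : b ≤ d) (F : Fin d → ℝ) :
    ∑ J ∈ Finset.powersetCard b (Finset.univ : Finset (Fin d)), ∑ i ∈ J, F i
      = ((d-1).choose (b-1) : ℝ) * ∑ i, F i := by
  rw [block_swap]
  rw [Finset.mul_sum]
  apply Finset.sum_congr rfl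
  intro i _
  rw [Finset.sum_const, count_single hb hbd i, nsmul_eq_mul]

lemma sum_blocks_pair {d b : ℕ} (hb : 1 ≤ b) (hbd : b ≤ d) (a : Fin d → Fin d → ℝ) :
    ∑ J ∈ Finset.powersetCard b (Finset.univ : Finset (Fin d)), ∑ i ∈ J, ∑ j ∈ J, a i j
      = (pairCount d b : ℝ) * (∑ i, ∑ j, a i j)
        + (((d-1).choose (b-1) : ℝ) - (pairCount d b : ℝ)) * ∑ i, a i i := by
  rw [block_swap]
  have hinner : ∀ i : Fin d,
      ∑ J ∈ (Finset.powersetCard b (Finset.univ : Finset (Fin d))).filter (fun J => i ∈ J),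
        ∑ j ∈ J, a i j
      = ∑ j, (if i = j then ((d-1).choose (b-1) : ℝ) else (pairCount d b : ℝ)) * a i j := by
    intro i
    calc ∑ J ∈ (Finset.powersetCard b (Finset.univ : Finset (Fin d))).filter (fun J => i ∈ J),
          ∑ j ∈ J, a i j
        = ∑ J ∈ (Finset.powersetCard b (Finset.univ : Finset (Fin d))).filter (fun J => i ∈ J),
          ∑ j, if j ∈ J then a i j else 0 := Finset.sum_congr rfl fun J _ => by
            rw [Finset.sum_ite_mem, Finset.univ_inter]
      _ = ∑ j, ∑ J ∈ (Finset.powersetCard b (Finset.univ : Finset (Fin d))).filter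
            (fun J => i ∈ J), if j ∈ J then a i j else 0 := Finset.sum_comm
      _ = ∑ j, (if i = j then ((d-1).choose (b-1) : ℝ) else (pairCount d b : ℝ)) * a i j := by
          apply Finset.sum_congr rfl
          intro j _
          rw [← Finset.sum_filter, Finset.filter_filter, Finset.sum_const, nsmul_eq_mul]
          congr 1
          by_cases hij : i = j
          · rw [if_pos hij]
            subst hij
            have heq : Finset.filter (fun J => i ∈ J ∧ i ∈ J)
                (Finset.powersetCard b (Finset.univ : Finset (Fin d)))
                = Finset.filter (fun J => i ∈ J)
                  (Finset.powersetCard b (Finset.univ : Finset (Fin d))) := by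
              apply Finset.filter_congr; intro J _; simp
            rw [heq, count_single hb hbd i]
          · rw [if_neg hij, count_pair hb hbd i j hij]
  calc ∑ i, ∑ J ∈ (Finset.powersetCard b (Finset.univ : Finset (Fin d))).filter
        (fun J => i ∈ J), ∑ j ∈ J, a i j
      = ∑ i, ∑ j, (if i = j then ((d-1).choose (b-1) : ℝ) else (pairCount d b : ℝ)) * a i j :=
        Finset.sum_congr rfl fun i _ => hinner i
    _ = ∑ i, ∑ j, ((pairCount d b : ℝ) * a i j
          + if i = j then (((d-1).choose (b-1) : ℝ) - (pairCount d b : ℝ)) * a i j else 0) := by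
        apply Finset.sum_congr rfl; intro i _
        apply Finset.sum_congr rfl; intro j _
        by_cases hij : i = j <;> simp [hij] <;> ring
    _ = (pairCount d b : ℝ) * (∑ i, ∑ j, a i j)
        + (((d-1).choose (b-1) : ℝ) - (pairCount d b : ℝ)) * ∑ i, a i i := by
        rw [Finset.mul_sum, Finset.mul_sum, ← Finset.sum_add_distrib]
        apply Finset.sum_congr rfl; intro i _
        rw [Finset.sum_add_distrib, Finset.mul_sum, Finset.sum_ite_eq (Finset.univ) i
          (fun j => (((d-1).choose (b-1) : ℝ) - (pairCount d b : ℝ)) * a i j)]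
        simp

section
variable {d : ℕ} (H : Matrix (Fin d) (Fin d) ℝ)

lemma dot_sym (Hsym : ∀ i j, H i j = H j i) (x y : Fin d → ℝ) :
    x ⬝ᵥ H *ᵥ y = y ⬝ᵥ H *ᵥ x := by
  simp only [dotProduct, mulVec, Finset.mul_sum]
  rw [Finset.sum_comm]
  exact Finset.sum_congr rfl fun j _ => Finset.sum_congr rfl fun i _ => by
    rw [Hsym i j]; ring

lemma quad_expand (Hsym : ∀ i j, H i j = H j i) (c : Fin d → ℝ) (r : ℝ)
    (f : (Fin d → ℝ) → ℝ)
    (hf : ∀ w, f w = (1 / 2) * (w ⬝ᵥ H.mulVec w) + c ⬝ᵥ w + r)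
    (w u : Fin d → ℝ) :
    f (w + u) = f w + u ⬝ᵥ (H *ᵥ w + c) + (1/2) * (u ⬝ᵥ H *ᵥ u) := by
  rw [hf, hf]
  have h1 : H *ᵥ (w + u) = H *ᵥ w + H *ᵥ u := Matrix.mulVec_add H w u
  rw [h1]
  simp only [dotProduct_add, add_dotProduct]
  rw [dot_sym H Hsym w u, dotProduct_comm c u]
  ring
end

section
variable {d : ℕ} (H : Matrix (Fin d) (Fin d) ℝ)

lemma quad_lower (m : ℝ) (hlow : ((H - m • (1 : Matrix (Fin d) (Fin d) ℝ))).PosSemidef)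
    (x : Fin d → ℝ) : m * ∑ i, x i ^ 2 ≤ x ⬝ᵥ H *ᵥ x := by
  have h := hlow.dotProduct_mulVec_nonneg x
  rw [star_trivial, Matrix.sub_mulVec, dotProduct_sub] at h
  have h2 : x ⬝ᵥ (m • (1 : Matrix (Fin d) (Fin d) ℝ)) *ᵥ x = m * ∑ i, x i ^ 2 := by
    rw [Matrix.smul_mulVec, Matrix.one_mulVec, dotProduct_smul]
    simp [dotProduct, pow_two, Finset.mul_sum]
  rw [h2] at h
  linarith

lemma quad_upper (L : ℝ) (hup : ((L • (1 : Matrix (Fin d) (Fin d) ℝ) - H)).PosSemidef)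
    (x : Fin d → ℝ) : x ⬝ᵥ H *ᵥ x ≤ L * ∑ i, x i ^ 2 := by
  have h := hup.dotProduct_mulVec_nonneg x
  rw [star_trivial, Matrix.sub_mulVec, dotProduct_sub] at h
  have h2 : x ⬝ᵥ (L • (1 : Matrix (Fin d) (Fin d) ℝ)) *ᵥ x = L * ∑ i, x i ^ 2 := by
    rw [Matrix.smul_mulVec, Matrix.one_mulVec, dotProduct_smul]
    simp [dotProduct, pow_two, Finset.mul_sum]
  rw [h2] at h
  linarith

lemma hermitian_entries (m : ℝ)
    (hlow : ((H - m • (1 : Matrix (Fin d) (Fin d) ℝ))).PosSemidef) :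
    ∀ i j, H i j = H j i := by
  intro i j
  have h := hlow.1
  have h2 := congrFun (congrFun h i) j
  simp only [Matrix.conjTranspose_apply, Matrix.sub_apply, Matrix.smul_apply,
    Matrix.one_apply, star_trivial, smul_eq_mul] at h2
  by_cases hij : i = j
  · rw [hij]
  · have hji : ¬ (j = i) := fun hc => hij hc.symm
    simp only [hij, hji, if_false] at h2
    linarith
end

section
variable {d : ℕ} (H : Matrix (Fin d) (Fin d) ℝ)

lemma strong_conv (m : ℝ) (hm : 0 < m)
    (hlow : ((H - m • (1 : Matrix (Fin d) (Fin d) ℝ))).PosSemidef)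
    (c : Fin d → ℝ) (r : ℝ) (f : (Fin d → ℝ) → ℝ)
    (hf : ∀ w, f w = (1 / 2) * (w ⬝ᵥ H.mulVec w) + c ⬝ᵥ w + r)
    (fstar : ℝ) (hstar : IsGLB (Set.range f) fstar) (w : Fin d → ℝ) :
    f w - fstar ≤ (∑ i, (H *ᵥ w + c) i ^ 2) / (2 * m) := by
  set g : Fin d → ℝ := H *ᵥ w + c with hg
  have Hsym := hermitian_entries H m hlow
  have hlb : ∀ v, f w - (∑ i, g i ^ 2) / (2 * m) ≤ f v := by
    intro v
    have hv : v = w + (v - w) := by ring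
    have hexp := quad_expand H Hsym c r f hf w (v - w)
    rw [← hv] at hexp
    set u : Fin d → ℝ := v - w with hu
    have hq : m * ∑ i, u i ^ 2 ≤ u ⬝ᵥ H *ᵥ u := quad_lower H m hlow u
    have hdot : u ⬝ᵥ g = ∑ i, u i * g i := rfl
    have hptwise : ∀ i : Fin d,
        -(g i ^ 2 / (2 * m)) ≤ u i * g i + (m / 2) * u i ^ 2 := by
      intro i
      have h0 : 0 ≤ (m * u i + g i) ^ 2 / (2 * m) := by positivity
      have hexpand : (m * u i + g i) ^ 2 / (2 * m)
          = (m / 2) * u i ^ 2 + u i * g i + g i ^ 2 / (2 * m) := by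
        field_simp
        ring
      linarith [h0, hexpand.symm.le, hexpand.le]
    have hsum : -(∑ i, g i ^ 2 / (2 * m)) ≤ ∑ i, (u i * g i + (m / 2) * u i ^ 2) := by
      rw [← Finset.sum_neg_distrib]
      exact Finset.sum_le_sum fun i _ => hptwise i
    have hsum2 : ∑ i, (u i * g i + (m / 2) * u i ^ 2)
        = u ⬝ᵥ g + (m / 2) * ∑ i, u i ^ 2 := by
      rw [Finset.sum_add_distrib, ← Finset.mul_sum, hdot]
    have hsum3 : ∑ i, g i ^ 2 / (2 * m) = (∑ i, g i ^ 2) / (2 * m) := by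
      rw [Finset.sum_div]
    rw [hsum2, hsum3] at hsum
    -- f v = f w + u⬝ᵥg + (1/2) u⬝ᵥHu ≥ f w + u⬝ᵥg + (m/2)∑u² ≥ f w - ∑g²/(2m)
    have : f w + (u ⬝ᵥ g + (m / 2) * ∑ i, u i ^ 2) ≤ f v := by
      rw [hexp]
      have : (0:ℝ) ≤ ∑ i, u i ^ 2 := Finset.sum_nonneg fun i _ => sq_nonneg _
      linarith
    linarith
  have hmem : (f w - (∑ i, g i ^ 2) / (2 * m)) ∈ lowerBounds (Set.range f) := by
    rintro y ⟨v, rfl⟩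
    exact hlb v
  have := hstar.2 hmem
  linarith
end

set_option maxHeartbeats 2000000 in
lemma bcd_key {d b : ℕ} (hd : 0 < d) (hb : 1 ≤ b) (hbd : b ≤ d)
    (H : Matrix (Fin d) (Fin d) ℝ) (m L : ℝ) (hm : 0 < m) (hmL : m ≤ L)
    (hlow : ((H - m • (1 : Matrix (Fin d) (Fin d) ℝ))).PosSemidef)
    (hup : ((L • (1 : Matrix (Fin d) (Fin d) ℝ) - H)).PosSemidef)
    (c : Fin d → ℝ) (r : ℝ) (f : (Fin d → ℝ) → ℝ)
    (hf : ∀ w, f w = (1 / 2) * (w ⬝ᵥ H.mulVec w) + c ⬝ᵥ w + r)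
    (step : Finset (Fin d) → (Fin d → ℝ) → (Fin d → ℝ))
    (hstep_min : ∀ I w (v : Fin d → ℝ),
      f (step I w) ≤ f (fun i => if i ∈ I then v i else w i))
    (fstar : ℝ) (hstar : IsGLB (Set.range f) fstar)
    (Leff : ℝ)
    (hLeff : Leff = (Real.exp 1) ^ 2 * L +
      ((d : ℝ) * Real.log (2 * (d : ℝ) ^ 2 / b) / b) *
        sSup (Set.range fun i : Fin d => |H i i|))
    (w : Fin d → ℝ) :
    ∑ J ∈ Finset.powersetCard b (Finset.univ : Finset (Fin d)), (f (step J w) - fstar)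
      ≤ ((Finset.powersetCard b (Finset.univ : Finset (Fin d))).card : ℝ)
          * (1 - m / (2 * Leff)) * (f w - fstar) := by
  have hL : 0 < L := lt_of_lt_of_le hm hmL
  set Lmax : ℝ := sSup (Set.range fun i : Fin d => |H i i|) with hLmaxdef
  have hLmax_ub : ∀ i, |H i i| ≤ Lmax := fun i => by
    rw [hLmaxdef]
    exact le_csSup ((Set.finite_range _).bddAbove) ⟨i, rfl⟩
  have hLmax0 : 0 ≤ Lmax := le_trans (abs_nonneg _) (hLmax_ub ⟨0, hd⟩)
  have Hsym := hermitian_entries H m hlow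
  set g : Fin d → ℝ := H *ᵥ w + c with hgdef
  set G : ℝ := ∑ i, g i ^ 2 with hGdef
  have hG : 0 ≤ G := by
    rw [hGdef]
    exact Finset.sum_nonneg fun i _ => sq_nonneg _
  have hd' : (0:ℝ) < d := by exact_mod_cast hd
  have hb' : (0:ℝ) < b := by exact_mod_cast hb
  have hbd' : (b:ℝ) ≤ d := by exact_mod_cast hbd
  set B : ℝ := (b:ℝ)/(d:ℝ) * L + Lmax with hBdef
  have hB : 0 < B := by
    rw [hBdef]
    positivity
  set t : ℝ := 1/B with htdef
  set Ω : Finset (Finset (Fin d)) := Finset.powersetCard b (Finset.univ : Finset (Fin d))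
    with hΩdef
  clear_value Lmax g G B t Ω
  -- per-block bound
  have hJbound : ∀ J : Finset (Fin d), f (step J w) ≤
      f w - t * (∑ i ∈ J, g i ^ 2) + t^2/2 * (∑ i ∈ J, ∑ j ∈ J, g i * H i j * g j) := by
    intro J
    have htrial := hstep_min J w (fun i => w i - t * g i)
    set u : Fin d → ℝ := fun i => if i ∈ J then -(t * g i) else 0 with hudef
    have htrial_eq : (fun i => if i ∈ J then w i - t * g i else w i) = w + u := by
      funext i
      by_cases h : i ∈ J <;> simp [hudef, h, Pi.add_apply] <;> ring
    have hdot1 : u ⬝ᵥ g = -(t * ∑ i ∈ J, g i ^ 2) := by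
      show ∑ i, u i * g i = _
      calc ∑ i, u i * g i = ∑ i, (if i ∈ J then -(t * g i ^ 2) else 0) :=
            Finset.sum_congr rfl fun i _ => by
              by_cases h : i ∈ J <;> simp [hudef, h] <;> ring
        _ = ∑ i ∈ J, -(t * g i ^ 2) := by rw [Finset.sum_ite_mem, Finset.univ_inter]
        _ = -(t * ∑ i ∈ J, g i ^ 2) := by
            rw [Finset.mul_sum, ← Finset.sum_neg_distrib]
    have hdot2 : u ⬝ᵥ H *ᵥ u = t^2 * ∑ i ∈ J, ∑ j ∈ J, g i * H i j * g j := by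
      have hHu : ∀ i, (H *ᵥ u) i = ∑ j ∈ J, H i j * -(t * g j) := by
        intro i
        show ∑ j, H i j * u j = _
        calc ∑ j, H i j * u j = ∑ j, (if j ∈ J then H i j * -(t * g j) else 0) :=
              Finset.sum_congr rfl fun j _ => by
                by_cases h : j ∈ J <;> simp [hudef, h]
          _ = ∑ j ∈ J, H i j * -(t * g j) := by rw [Finset.sum_ite_mem, Finset.univ_inter]
      calc u ⬝ᵥ H *ᵥ u = ∑ i, u i * (H *ᵥ u) i := rfl
        _ = ∑ i, (if i ∈ J then -(t * g i) * ∑ j ∈ J, H i j * -(t * g j) else 0) :=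
            Finset.sum_congr rfl fun i _ => by
              rw [hHu i]
              by_cases h : i ∈ J <;> simp [hudef, h]
        _ = ∑ i ∈ J, -(t * g i) * ∑ j ∈ J, H i j * -(t * g j) := by
            rw [Finset.sum_ite_mem, Finset.univ_inter]
        _ = t^2 * ∑ i ∈ J, ∑ j ∈ J, g i * H i j * g j := by
            rw [Finset.mul_sum]
            apply Finset.sum_congr rfl
            intro i _
            rw [Finset.mul_sum, Finset.mul_sum]
            apply Finset.sum_congr rfl
            intro j _
            ring
    have hexp := quad_expand H Hsym c r f hf w u
    rw [htrial_eq, hexp, ← hgdef, hdot1, hdot2] at htrial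
    calc f (step J w) ≤ f w + -(t * ∑ i ∈ J, g i ^ 2)
          + 1/2 * (t^2 * ∑ i ∈ J, ∑ j ∈ J, g i * H i j * g j) := htrial
      _ = f w - t * (∑ i ∈ J, g i ^ 2)
          + t^2/2 * (∑ i ∈ J, ∑ j ∈ J, g i * H i j * g j) := by ring
  -- aggregate over blocks
  set c1' : ℝ := ((d-1).choose (b-1) : ℝ) with hc1def
  set C2' : ℝ := (pairCount d b : ℝ) with hC2def
  set N' : ℝ := (Ω.card : ℝ) with hNdef
  set QH : ℝ := ∑ i, ∑ j, g i * H i j * g j with hQHdef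
  set Dg : ℝ := ∑ i, g i * H i i * g i with hDgdef
  clear_value c1' C2' N' QH Dg
  have hNcard : N' = (d.choose b : ℝ) := by
    rw [hNdef, hΩdef, Finset.card_powersetCard, Finset.card_univ, Fintype.card_fin]
  have hsum_blocks : ∑ J ∈ Ω, f (step J w)
      ≤ N' * f w - t * (c1' * G) + t^2/2 * (C2' * QH + (c1' - C2') * Dg) := by
    calc ∑ J ∈ Ω, f (step J w)
        ≤ ∑ J ∈ Ω, (f w - t * (∑ i ∈ J, g i ^ 2)
            + t^2/2 * (∑ i ∈ J, ∑ j ∈ J, g i * H i j * g j)) :=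
          Finset.sum_le_sum fun J _ => hJbound J
      _ = (∑ J ∈ Ω, (f w - t * (∑ i ∈ J, g i ^ 2)))
            + t^2/2 * ∑ J ∈ Ω, ∑ i ∈ J, ∑ j ∈ J, g i * H i j * g j := by
          rw [Finset.sum_add_distrib, Finset.mul_sum]
      _ = (N' * f w - t * (c1' * G))
            + t^2/2 * ((C2' * QH) + (c1' - C2') * Dg) := by
          rw [hNdef, hc1def, hC2def, hQHdef, hDgdef, hGdef, hΩdef]
          rw [Finset.sum_sub_distrib, Finset.sum_const, nsmul_eq_mul, ← Finset.mul_sum,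
            sum_blocks_single hb hbd, sum_blocks_pair hb hbd]
      _ = N' * f w - t * (c1' * G) + t^2/2 * (C2' * QH + (c1' - C2') * Dg) := by ring
  have hgHg : g ⬝ᵥ H *ᵥ g = QH := by
    show ∑ i, g i * (∑ j, H i j * g j) = _
    rw [hQHdef]
    apply Finset.sum_congr rfl
    intro i _
    rw [Finset.mul_sum]
    apply Finset.sum_congr rfl
    intro j _
    ring
  have hQHle : QH ≤ L * G := by
    have h := quad_upper H L hup g
    rw [hgHg] at h
    rw [hGdef]
    exact h
  have hDgle : Dg ≤ Lmax * G := by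
    rw [hDgdef, hGdef, Finset.mul_sum]
    apply Finset.sum_le_sum
    intro i _
    calc g i * H i i * g i = H i i * g i ^ 2 := by ring
      _ ≤ Lmax * g i ^ 2 :=
        mul_le_mul_of_nonneg_right ((le_abs_self _).trans (hLmax_ub i)) (sq_nonneg _)
  have hc1N : c1' * (d:ℝ) = N' * (b:ℝ) := by
    rw [hNcard, hc1def]
    exact_mod_cast choose_identity1 hb hbd
  have hC2le : C2' ≤ c1' := by
    rw [hC2def, hc1def]
    exact_mod_cast pairCount_le hb hbd
  have hC2mul : C2' * (d:ℝ) ≤ c1' * (b:ℝ) := by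
    rw [hC2def, hc1def]
    exact_mod_cast pairCount_mul hb hbd
  have hc1_0 : (0:ℝ) ≤ c1' := by rw [hc1def]; exact Nat.cast_nonneg _
  have hC2_0 : (0:ℝ) ≤ C2' := by rw [hC2def]; exact Nat.cast_nonneg _
  have hN0 : (0:ℝ) ≤ N' := by rw [hNdef]; exact Nat.cast_nonneg _
  have hquad : C2' * QH + (c1' - C2') * Dg ≤ c1' * G * B := by
    have h1 : C2' * QH ≤ C2' * (L * G) := mul_le_mul_of_nonneg_left hQHle hC2_0
    have h2 : (c1' - C2') * Dg ≤ (c1' - C2') * (Lmax * G) :=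
      mul_le_mul_of_nonneg_left hDgle (by linarith)
    have h3 : C2' * (L * G) ≤ c1' * ((b:ℝ)/(d:ℝ)) * (L * G) := by
      apply mul_le_mul_of_nonneg_right _ (by positivity)
      rw [mul_div_assoc']
      rw [le_div_iff₀ hd']
      linarith
    have h4 : (c1' - C2') * (Lmax * G) ≤ c1' * (Lmax * G) := by
      apply mul_le_mul_of_nonneg_right _ (by positivity)
      linarith
    have h5 : c1' * ((b:ℝ)/(d:ℝ)) * (L * G) + c1' * (Lmax * G) = c1' * G * B := by
      rw [hBdef]; ring
    linarith
  have hstep2 : ∑ J ∈ Ω, f (step J w) ≤ N' * f w - c1' * G / (2 * B) := by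
    have hmono : t^2/2 * (C2' * QH + (c1' - C2') * Dg) ≤ t^2/2 * (c1' * G * B) :=
      mul_le_mul_of_nonneg_left hquad (by positivity)
    have heq : N' * f w - t * (c1' * G) + t^2/2 * (c1' * G * B)
        = N' * f w - c1' * G / (2 * B) := by
      rw [htdef]
      field_simp
      ring
    linarith
  have hscG : f w - fstar ≤ G / (2 * m) := by
    have h := strong_conv H m hm hlow c r f hf fstar hstar w
    rw [← hgdef] at h
    rw [hGdef]
    exact h
  have harg : (2:ℝ) ≤ 2 * (d:ℝ)^2 / b := by
    have h0 : (1:ℝ) ≤ d := by exact_mod_cast hd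
    have hdd : (d:ℝ) ≤ (d:ℝ)^2 := by
      have h := mul_le_mul_of_nonneg_left h0 hd'.le
      rw [mul_one] at h
      rw [pow_two]
      exact h
    rw [le_div_iff₀ hb']
    linarith
  have hlog2 : (1:ℝ)/2 ≤ Real.log (2 * (d:ℝ)^2 / b) := by
    have h2 : (0.6931471803 : ℝ) < Real.log 2 := Real.log_two_gt_d9
    have h3 : Real.log 2 ≤ Real.log (2 * (d:ℝ)^2 / b) :=
      Real.log_le_log (by norm_num) harg
    linarith
  have hexp1 : (2:ℝ) ≤ Real.exp 1 := by
    have h := Real.add_one_le_exp (1:ℝ)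
    linarith
  have hexp2 : (4:ℝ) ≤ (Real.exp 1)^2 := by
    have h : (2:ℝ) * 2 ≤ Real.exp 1 * Real.exp 1 :=
      mul_le_mul hexp1 hexp1 (by norm_num) (by linarith)
    rw [pow_two]
    linarith
  have hLeffpos : 0 < Leff := by
    rw [hLeff]
    have hlogpos : 0 ≤ Real.log (2 * (d:ℝ)^2 / b) := by linarith
    have h1 : (0:ℝ) < (Real.exp 1)^2 * L := by positivity
    have h2 : (0:ℝ) ≤ (d:ℝ) * Real.log (2 * (d:ℝ)^2 / b) / b * Lmax := by positivity
    linarith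
  have hBLeff : (d:ℝ) * B ≤ 2 * (b:ℝ) * Leff := by
    rw [hLeff, hBdef]
    have e1 : (b:ℝ) * L ≤ 2 * (b:ℝ) * ((Real.exp 1)^2 * L) := by
      calc (b:ℝ) * L = 1 * ((b:ℝ) * L) := by ring
        _ ≤ (2 * (Real.exp 1)^2) * ((b:ℝ) * L) :=
          mul_le_mul_of_nonneg_right (by linarith) (by positivity)
        _ = 2 * (b:ℝ) * ((Real.exp 1)^2 * L) := by ring
    have e2 : (d:ℝ) * Lmax
        ≤ 2 * (b:ℝ) * ((d:ℝ) * Real.log (2 * (d:ℝ)^2 / b) / b * Lmax) := by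
      have heq2 : 2 * (b:ℝ) * ((d:ℝ) * Real.log (2 * (d:ℝ)^2 / b) / b * Lmax)
          = 2 * (d:ℝ) * Real.log (2 * (d:ℝ)^2 / b) * Lmax := by
        field_simp
      rw [heq2]
      calc (d:ℝ) * Lmax = 1 * ((d:ℝ) * Lmax) := by ring
        _ ≤ (2 * Real.log (2 * (d:ℝ)^2 / b)) * ((d:ℝ) * Lmax) :=
          mul_le_mul_of_nonneg_right (by linarith) (mul_nonneg hd'.le hLmax0)
        _ = 2 * (d:ℝ) * Real.log (2 * (d:ℝ)^2 / b) * Lmax := by ring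
    have e3 : (d:ℝ) * ((b:ℝ)/(d:ℝ) * L + Lmax) = (b:ℝ) * L + (d:ℝ) * Lmax := by
      field_simp
    rw [e3]
    rw [mul_add]
    linarith
  have hkey2 : N' * (m / (2*Leff)) * (f w - fstar) ≤ c1' * G / (2 * B) := by
    have ha : N' * (m/(2*Leff)) * (f w - fstar) ≤ N' * (m/(2*Leff)) * (G/(2*m)) :=
      mul_le_mul_of_nonneg_left hscG (by positivity)
    have hb2 : N' * (m/(2*Leff)) * (G/(2*m)) = N' * G / (4 * Leff) := by
      field_simp
      ring
    have hc2 : N' * G / (4*Leff) ≤ c1' * G / (2*B) := by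
      rw [div_le_div_iff₀ (by positivity) (by positivity)]
      apply le_of_mul_le_mul_right _ hd'
      have hmul := mul_le_mul_of_nonneg_left hBLeff (mul_nonneg hN0 hG)
      calc N' * G * (2 * B) * d = 2 * (N' * G * ((d:ℝ) * B)) := by ring
        _ ≤ 2 * (N' * G * (2 * (b:ℝ) * Leff)) := by linarith
        _ = (N' * (b:ℝ)) * G * (4 * Leff) := by ring
        _ = (c1' * (d:ℝ)) * G * (4 * Leff) := by rw [hc1N]
        _ = c1' * G * (4 * Leff) * d := by ring
    linarith
  have hsumsub : ∑ J ∈ Ω, (f (step J w) - fstar)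
      = (∑ J ∈ Ω, f (step J w)) - N' * fstar := by
    rw [hNdef, Finset.sum_sub_distrib, Finset.sum_const, nsmul_eq_mul]
  have hrhs : N' * (1 - m / (2 * Leff)) * (f w - fstar)
      = N' * (f w - fstar) - N' * (m/(2*Leff)) * (f w - fstar) := by ring
  rw [hsumsub, hrhs]
  linarith

lemma bcd_induct {d : ℕ} (f : (Fin d → ℝ) → ℝ) (fstar ρ : ℝ) (hρ : 0 ≤ ρ)
    (Ωb : Finset (Finset (Fin d)))
    (step : Finset (Fin d) → (Fin d → ℝ) → (Fin d → ℝ))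
    (key : ∀ w, ∑ J ∈ Ωb, (f (step J w) - fstar) ≤ (Ωb.card : ℝ) * ρ * (f w - fstar)) :
    ∀ (τ : ℕ) (w0 : Fin d → ℝ) (W : (Fin τ → Finset (Fin d)) → ℕ → (Fin d → ℝ)),
      (∀ s, W s 0 = w0) → (∀ s k (h : k < τ), W s (k+1) = step (s ⟨k, h⟩) (W s k)) →
      ∑ s ∈ Fintype.piFinset (fun _ : Fin τ => Ωb), (f (W s τ) - fstar)
        ≤ (Ωb.card : ℝ)^τ * ρ^τ * (f w0 - fstar) := by
  intro τ
  induction τ with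
  | zero =>
    intro w0 W hW0 _
    simp [hW0]
  | succ n ih =>
    intro w0 W hW0 hWsucc
    have hsplit : ∑ s ∈ Fintype.piFinset (fun _ : Fin (n+1) => Ωb), (f (W s (n+1)) - fstar)
        = ∑ p ∈ Ωb ×ˢ Fintype.piFinset (fun _ : Fin n => Ωb),
            (f (W (Fin.cons p.1 p.2) (n+1)) - fstar) := by
      apply Finset.sum_nbij' (fun s => (s 0, Fin.tail s)) (fun p => Fin.cons p.1 p.2)
      · intro s hs
        simp only [Fintype.mem_piFinset] at hs
        simp only [Finset.mem_product, Fintype.mem_piFinset]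
        exact ⟨hs 0, fun i => hs _⟩
      · intro p hp
        simp only [Finset.mem_product, Fintype.mem_piFinset] at hp
        simp only [Fintype.mem_piFinset]
        intro i
        rcases Fin.eq_zero_or_eq_succ i with h | ⟨j, rfl⟩
        · rw [h, Fin.cons_zero]; exact hp.1
        · rw [Fin.cons_succ]; exact hp.2 j
      · intro s _; exact Fin.cons_self_tail s
      · intro p _; simp [Fin.tail_cons]
      · intro s _; rw [Fin.cons_self_tail]
    rw [hsplit, Finset.sum_product]
    have hstep1 : ∀ J ∈ Ωb, ∑ s' ∈ Fintype.piFinset (fun _ : Fin n => Ωb),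
        (f (W (Fin.cons J s') (n+1)) - fstar)
        ≤ (Ωb.card : ℝ)^n * ρ^n * (f (step J w0) - fstar) := by
      intro J _
      have := ih (step J w0) (fun s' k => W (Fin.cons J s') (k+1))
        (fun s' => by
          show W (Fin.cons J s') (0+1) = step J w0
          rw [hWsucc (Fin.cons J s') 0 (Nat.succ_pos n), hW0]
          congr 1)
        (fun s' k hk => by
          show W (Fin.cons J s') (k+1+1) = step (s' ⟨k, hk⟩) (W (Fin.cons J s') (k+1))
          rw [hWsucc (Fin.cons J s') (k+1) (Nat.succ_lt_succ hk)]
          congr 1)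
      exact this
    calc ∑ J ∈ Ωb, ∑ s' ∈ Fintype.piFinset (fun _ : Fin n => Ωb),
          (f (W (Fin.cons J s') (n+1)) - fstar)
        ≤ ∑ J ∈ Ωb, (Ωb.card : ℝ)^n * ρ^n * (f (step J w0) - fstar) :=
          Finset.sum_le_sum hstep1
      _ = (Ωb.card : ℝ)^n * ρ^n * ∑ J ∈ Ωb, (f (step J w0) - fstar) := by
          rw [Finset.mul_sum]
      _ ≤ (Ωb.card : ℝ)^n * ρ^n * ((Ωb.card : ℝ) * ρ * (f w0 - fstar)) := by
          apply mul_le_mul_of_nonneg_left (key w0)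
          positivity
      _ = (Ωb.card : ℝ)^(n+1) * ρ^(n+1) * (f w0 - fstar) := by ring

/-- Theorem 1: randomized block coordinate descent on a quadratic with Hessian
`H` satisfying `m I ⪯ H ⪯ L I` converges linearly at rate `1 - m/(2 L_eff)`,
where `L_eff = e² L + (d log(2d²/b)/b) ‖diag(H)‖_∞`.  The expectation over
i.i.d. uniform size-`b` blocks is written as an average over block sequences. -/
theorem bcd_rate_Leff {d b : ℕ} (hd : 0 < d) (hb : 1 ≤ b) (hbd : b ≤ d)
    (H : Matrix (Fin d) (Fin d) ℝ) (m L : ℝ) (hm : 0 < m) (hmL : m ≤ L)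
    (hlow : ((H - m • (1 : Matrix (Fin d) (Fin d) ℝ))).PosSemidef)
    (hup : ((L • (1 : Matrix (Fin d) (Fin d) ℝ) - H)).PosSemidef)
    (c : Fin d → ℝ) (r : ℝ) (f : (Fin d → ℝ) → ℝ)
    (hf : ∀ w, f w = (1 / 2) * (w ⬝ᵥ H.mulVec w) + c ⬝ᵥ w + r)
    (Ωb : Finset (Finset (Fin d))) (hΩb : Ωb = Finset.powersetCard b Finset.univ)
    -- exact block minimization step
    (step : Finset (Fin d) → (Fin d → ℝ) → (Fin d → ℝ))
    (hstep_fix : ∀ I w i, i ∉ I → step I w i = w i)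
    (hstep_min : ∀ I w (v : Fin d → ℝ),
      f (step I w) ≤ f (fun i => if i ∈ I then v i else w i))
    -- iterates along a sequence of blocks
    (τ : ℕ) (w0 : Fin d → ℝ)
    (W : (Fin τ → Finset (Fin d)) → ℕ → (Fin d → ℝ))
    (hW0 : ∀ s, W s 0 = w0)
    (hWsucc : ∀ s k (h : k < τ), W s (k + 1) = step (s ⟨k, h⟩) (W s k))
    (fstar : ℝ) (hstar : IsGLB (Set.range f) fstar)
    (Leff : ℝ)
    (hLeff : Leff = (Real.exp 1) ^ 2 * L +
      ((d : ℝ) * Real.log (2 * (d : ℝ) ^ 2 / b) / b) *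
        sSup (Set.range fun i : Fin d => |H i i|)) :
    (1 / (Ωb.card : ℝ) ^ τ) *
        ∑ s ∈ Fintype.piFinset (fun _ : Fin τ => Ωb), (f (W s τ) - fstar) ≤
      (1 - m / (2 * Leff)) ^ τ * (f w0 - fstar) := by
  have hL : 0 < L := lt_of_lt_of_le hm hmL
  have hd' : (0:ℝ) < d := by exact_mod_cast hd
  have hb' : (0:ℝ) < b := by exact_mod_cast hb
  have hbd' : (b:ℝ) ≤ d := by exact_mod_cast hbd
  have hLmax0 : 0 ≤ sSup (Set.range fun i : Fin d => |H i i|) :=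
    le_trans (abs_nonneg _)
      (le_csSup ((Set.finite_range _).bddAbove) ⟨(⟨0, hd⟩ : Fin d), rfl⟩)
  have harg : (2:ℝ) ≤ 2 * (d:ℝ)^2 / b := by
    have h0 : (1:ℝ) ≤ d := by exact_mod_cast hd
    have hdd : (d:ℝ) ≤ (d:ℝ)^2 := by
      have h := mul_le_mul_of_nonneg_left h0 hd'.le
      rw [mul_one] at h
      rw [pow_two]
      exact h
    rw [le_div_iff₀ hb']
    linarith
  have hlog2 : (1:ℝ)/2 ≤ Real.log (2 * (d:ℝ)^2 / b) := by
    have h2 : (0.6931471803 : ℝ) < Real.log 2 := Real.log_two_gt_d9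
    have h3 : Real.log 2 ≤ Real.log (2 * (d:ℝ)^2 / b) :=
      Real.log_le_log (by norm_num) harg
    linarith
  have hexp2 : (2:ℝ) ≤ Real.exp 1 := by
    have h := Real.add_one_le_exp (1:ℝ)
    linarith
  have hlogterm : (0:ℝ) ≤ (d : ℝ) * Real.log (2 * (d : ℝ) ^ 2 / b) / b *
      sSup (Set.range fun i : Fin d => |H i i|) := by
    apply mul_nonneg _ hLmax0
    apply div_nonneg _ hb'.le
    apply mul_nonneg hd'.le
    linarith
  have he4 : (4:ℝ) ≤ (Real.exp 1)^2 := by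
    have h : (2:ℝ) * 2 ≤ Real.exp 1 * Real.exp 1 :=
      mul_le_mul hexp2 hexp2 (by norm_num) (by linarith)
    rw [pow_two]
    linarith
  have hLeffge : 4 * L ≤ Leff := by
    rw [hLeff]
    have h1 : 4 * L ≤ (Real.exp 1)^2 * L := mul_le_mul_of_nonneg_right he4 hL.le
    linarith
  have hLeffpos : 0 < Leff := by linarith
  have hρ : 0 ≤ 1 - m / (2 * Leff) := by
    rw [sub_nonneg, div_le_one (by positivity)]
    linarith
  have key : ∀ w, ∑ J ∈ Ωb, (f (step J w) - fstar)
      ≤ (Ωb.card : ℝ) * (1 - m / (2 * Leff)) * (f w - fstar) := by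
    intro w
    rw [hΩb]
    exact bcd_key hd hb hbd H m L hm hmL hlow hup c r f hf step hstep_min
      fstar hstar Leff hLeff w
  have hind := bcd_induct f fstar _ hρ Ωb step key τ w0 W hW0 hWsucc
  have hN : (0:ℝ) < (Ωb.card : ℝ) := by
    rw [hΩb, Finset.card_powersetCard, Finset.card_univ, Fintype.card_fin]
    exact_mod_cast Nat.choose_pos hbd
  have hNt : (0:ℝ) < (Ωb.card : ℝ)^τ := pow_pos hN τ
  calc (1 / (Ωb.card : ℝ) ^ τ) *
        ∑ s ∈ Fintype.piFinset (fun _ : Fin τ => Ωb), (f (W s τ) - fstar)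
      ≤ (1 / (Ωb.card : ℝ) ^ τ) *
        ((Ωb.card : ℝ)^τ * (1 - m / (2 * Leff))^τ * (f w0 - fstar)) :=
        mul_le_mul_of_nonneg_left hind (by positivity)
    _ = (1 - m / (2 * Leff)) ^ τ * (f w0 - fstar) := by
        field_simp
end

section
/- Let Q_I := (1/t) P_I 1_{I∈𝒢} + (1/L) P_I 1_{I∉𝒢} where 0 < t ≤ L, P_I is the coordinate projection onto I ⊆ {1,...,d} with |I| = b, and 𝒢 ⊆ Ω_b with |𝒢^c|/|Ω_b| = α b/d, α ∈ [0,1]. If I is drawn uniformly from Ω_b, then λ_min(E Q_I) ≥ (b/d)((1−α)/t + α/L). -/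
open Matrix Finset

/-- Smallest eigenvalue of a real square matrix. -/
noncomputable def lamMin {ι : Type*} [Fintype ι] [DecidableEq ι]
    (A : Matrix ι ι ℝ) : ℝ :=
  sInf {μ : ℝ | Module.End.HasEigenvalue (Matrix.toLin' A) μ}

lemma card_filter_mem_powersetCard {d b : ℕ} (hb : 1 ≤ b) (i : Fin d) :
    ((Finset.powersetCard b (Finset.univ : Finset (Fin d))).filter
      (fun I => i ∈ I)).card = (d - 1).choose (b - 1) := by
  have := Finset.card_bij'
    (s := (Finset.powersetCard b (Finset.univ : Finset (Fin d))).filter (fun I => i ∈ I))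
    (t := Finset.powersetCard (b - 1) (Finset.univ.erase i))
    (fun I _ => I.erase i) (fun J _ => insert i J)
    (by
      intro a ha
      simp only [Finset.mem_filter, Finset.mem_powersetCard] at ha
      refine Finset.mem_powersetCard.2 ⟨Finset.erase_subset_erase _ (Finset.subset_univ _), ?_⟩
      rw [Finset.card_erase_of_mem ha.2, ha.1.2])
    (by
      intro a ha
      simp only [Finset.mem_powersetCard] at ha
      have hi : i ∉ a := fun h => (Finset.mem_erase.1 (ha.1 h)).1 rfl
      refine Finset.mem_filter.2 ⟨Finset.mem_powersetCard.2 ⟨Finset.subset_univ _, ?_⟩,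
        Finset.mem_insert_self _ _⟩
      rw [Finset.card_insert_of_notMem hi, ha.2, Nat.sub_add_cancel hb])
    (by
      intro a ha
      simp only [Finset.mem_filter] at ha
      exact Finset.insert_erase ha.2)
    (by
      intro a ha
      simp only [Finset.mem_powersetCard] at ha
      have hi : i ∉ a := fun h => (Finset.mem_erase.1 (ha.1 h)).1 rfl
      exact Finset.erase_insert hi)
  rw [this, Finset.card_powersetCard, Finset.card_erase_of_mem (Finset.mem_univ i),
    Finset.card_univ, Fintype.card_fin]

/-- For `Q_I = (1/t) P_I 1_{I∈𝒢} + (1/L) P_I 1_{I∉𝒢}` with `0 < t ≤ L`, `I`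
uniform on the size-`b` subsets `Ω_b`, and `|𝒢ᶜ|/|Ω_b| = α b/d`, the minimum
eigenvalue of `E Q_I` is at least `(b/d)((1-α)/t + α/L)`. -/
theorem lamMin_expected_Q {d b : ℕ} (hb : 1 ≤ b) (hbd : b ≤ d)
    (t L : ℝ) (ht : 0 < t) (htL : t ≤ L)
    (Ωb : Finset (Finset (Fin d))) (hΩb : Ωb = Finset.powersetCard b Finset.univ)
    (𝒢 : Finset (Finset (Fin d))) (h𝒢 : 𝒢 ⊆ Ωb)
    (α : ℝ) (hα0 : 0 ≤ α) (hα1 : α ≤ 1)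
    (hfrac : ((Ωb \ 𝒢).card : ℝ) = α * (b / d) * Ωb.card)
    (Q : Finset (Fin d) → Matrix (Fin d) (Fin d) ℝ)
    (hQ : ∀ I, Q I = if I ∈ 𝒢 then (1 / t) • proj I else (1 / L) • proj I) :
    (b / d : ℝ) * ((1 - α) / t + α / L) ≤
      lamMin ((Ωb.card : ℝ)⁻¹ • ∑ I ∈ Ωb, Q I) := by
  have hd : 1 ≤ d := le_trans hb hbd
  have hL : (0:ℝ) < L := lt_of_lt_of_le ht htL
  have hdR : (0:ℝ) < (d:ℝ) := by exact_mod_cast hd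
  -- cardinality of Ωb
  have hΩcard : Ωb.card = d.choose b := by
    rw [hΩb, Finset.card_powersetCard, Finset.card_univ, Fintype.card_fin]
  have hΩpos : 0 < Ωb.card := by
    rw [hΩcard]; exact Nat.choose_pos hbd
  have hn : (0:ℝ) < (Ωb.card : ℝ) := by exact_mod_cast hΩpos
  -- key choose identity
  have hNd : ((d - 1).choose (b - 1) : ℝ) * d = b * Ωb.card := by
    have h1 : d * (d - 1).choose (b - 1) = d.choose b * b := by
      have h2 := Nat.add_one_mul_choose_eq (d - 1) (b - 1)
      have e1 : d - 1 + 1 = d := by omega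
      have e2 : b - 1 + 1 = b := by omega
      rwa [e1, e2] at h2
    rw [hΩcard]
    exact_mod_cast by rw [mul_comm ((d-1).choose (b-1)) d, h1, mul_comm]
  -- the expected matrix is diagonal
  have hQ' : ∀ I, Q I = (if I ∈ 𝒢 then (1/t:ℝ) else 1/L) • proj I := by
    intro I; rw [hQ]; split <;> rfl
  set g : Fin d → ℝ := fun i =>
    (Ωb.card:ℝ)⁻¹ * ∑ I ∈ Ωb, (if I ∈ 𝒢 then (1/t:ℝ) else 1/L) * (if i ∈ I then 1 else 0)
    with hg
  have hM : (Ωb.card : ℝ)⁻¹ • ∑ I ∈ Ωb, Q I = Matrix.diagonal g := by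
    ext i j
    simp only [Matrix.smul_apply, Matrix.sum_apply, hQ', proj, smul_eq_mul,
      Matrix.diagonal_apply]
    by_cases hij : i = j
    · subst hij
      simp [hg, Matrix.diagonal_apply_eq]
    · simp [hij, Matrix.diagonal_apply_ne _ hij]
  rw [hM]
  -- eigenvalues of a diagonal matrix
  have hset : {μ : ℝ | Module.End.HasEigenvalue (Matrix.toLin' (Matrix.diagonal g)) μ}
      = Set.range g := by
    ext μ
    simp only [Set.mem_setOf_eq, Set.mem_range]
    exact hasEigenvalue_toLin'_diagonal_iff g
  rw [lamMin, hset]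
  haveI : Nonempty (Fin d) := ⟨⟨0, hd⟩⟩
  refine le_csInf (Set.range_nonempty g) ?_
  rintro μ ⟨i, rfl⟩
  -- bound g i
  have hsplit :
      ∑ I ∈ Ωb, (if I ∈ 𝒢 then (1/t:ℝ) else 1/L) * (if i ∈ I then 1 else 0)
      = ∑ I ∈ Ωb.filter (fun I => i ∈ I), (if I ∈ 𝒢 then (1/t:ℝ) else 1/L) := by
    rw [Finset.sum_filter]
    refine Finset.sum_congr rfl fun I _ => ?_
    by_cases h : i ∈ I <;> simp [h]
  set F := Ωb.filter (fun I => i ∈ I) with hF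
  have hFcard : F.card = (d - 1).choose (b - 1) := by
    rw [hF, hΩb]; exact card_filter_mem_powersetCard hb i
  set k1 := (F.filter (fun I => I ∈ 𝒢)).card with hk1
  set k2 := (F.filter (fun I => I ∉ 𝒢)).card with hk2
  have hks : k1 + k2 = F.card := Finset.card_filter_add_card_filter_not _
  have hsum2 : ∑ I ∈ F, (if I ∈ 𝒢 then (1/t:ℝ) else 1/L)
      = k1 * (1/t) + k2 * (1/L) := by
    rw [← Finset.sum_filter_add_sum_filter_not F (fun I => I ∈ 𝒢)]
    have h1 : ∑ I ∈ F.filter (fun I => I ∈ 𝒢), (if I ∈ 𝒢 then (1/t:ℝ) else 1/L)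
        = (k1:ℝ) * (1/t) := by
      rw [Finset.sum_congr rfl (fun I hI => if_pos (Finset.mem_filter.1 hI).2),
        Finset.sum_const, nsmul_eq_mul]
    have h2 : ∑ I ∈ F.filter (fun I => I ∉ 𝒢), (if I ∈ 𝒢 then (1/t:ℝ) else 1/L)
        = (k2:ℝ) * (1/L) := by
      rw [Finset.sum_congr rfl (fun I hI => if_neg (Finset.mem_filter.1 hI).2),
        Finset.sum_const, nsmul_eq_mul]
    rw [h1, h2]
  have hk2le : (k2 : ℝ) ≤ α * (b / d) * Ωb.card := by
    rw [← hfrac]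
    exact_mod_cast Finset.card_le_card (fun I hI => by
      obtain ⟨hIF, hIG⟩ := Finset.mem_filter.1 hI
      exact Finset.mem_sdiff.2 ⟨(Finset.mem_filter.1 hIF).1, hIG⟩)
  -- put it together
  set n : ℝ := (Ωb.card : ℝ) with hnn
  set N : ℝ := ((d - 1).choose (b - 1) : ℝ) with hNN
  set C : ℝ := α * (b / d) * n with hC
  have hk1N : (k1 : ℝ) = N - k2 := by
    have : (k1 : ℝ) + k2 = N := by
      rw [hNN, ← hFcard]; exact_mod_cast hks
    linarith
  have hinv : (1:ℝ)/L ≤ 1/t := one_div_le_one_div_of_le ht htL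
  have hSbound : (N - C) * (1/t) + C * (1/L) ≤ (k1:ℝ) * (1/t) + k2 * (1/L) := by
    rw [hk1N]
    nlinarith [mul_nonneg (sub_nonneg.2 hk2le) (sub_nonneg.2 hinv)]
  have hgi : g i = n⁻¹ * ((k1:ℝ) * (1/t) + k2 * (1/L)) := by
    rw [hg]; simp only []
    rw [hsplit, hsum2]
  have hkey : n⁻¹ * ((N - C) * (1/t) + C * (1/L))
      = (b / d : ℝ) * ((1 - α) / t + α / L) := by
    have hNval : N = b * n / d := by
      field_simp
      linarith [hNd]
    rw [hNval, hC]
    field_simp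
  rw [hgi, ← hkey]
  apply mul_le_mul_of_nonneg_left hSbound (le_of_lt (inv_pos.2 hn))
end
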